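/- Let F be a finitely generated free group and let φ : F → F be an automorphism that has an eigenvalue λ (a nonzero eigenvalue of the induced map on (F/[F,F]) ⊗_ℤ ℂ) which is not a root of unity. Then for every finite-index subgroup H of F with φ(H) ⊆ H, the restriction φ|_H has an eigenvalue that is not a root of unity; in particular there is no finite-index φ-invariant subgroup H of F such that every eigenvalue of φ|_H is a root of unity. -/

import Mathlib

open scoped TensorProduct

/-- The complex linear endomorphism of `(G/[G,G]) ⊗_ℤ ℂ` induced by a group
endomorphism `φ : G →* G`. -/
noncomputable def inducedEnd {G : Type*} [Group G] (φ : G →* G) :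
    Module.End ℂ (ℂ ⊗[ℤ] Additive (Abelianization G)) :=
  ((MonoidHom.toAdditive (Abelianization.map φ)).toIntLinearMap).baseChange ℂ

/-- `Λ(φ)`: the set of nonzero eigenvalues of the induced map on
`(G/[G,G]) ⊗_ℤ ℂ`. -/
noncomputable def specNZ {G : Type*} [Group G] (φ : G →* G) : Set ℂ :=
  {μ : ℂ | μ ≠ 0 ∧ Module.End.HasEigenvalue (inducedEnd φ) μ}

/-- The restriction of an endomorphism `φ` to a `φ`-invariant subgroup `H`,
as an endomorphism of `H`. -/
def restrictHom {G : Type*} [Group G] (φ : G →* G) (H : Subgroup G)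
    (hinv : ∀ x ∈ H, φ x ∈ H) : H →* H :=
  (φ.domRestrict H).codRestrict H fun x => hinv x x.2

/-- A complex number is a root of unity if some positive power of it equals `1`. -/
def IsRootOfUnity (z : ℂ) : Prop := ∃ n : ℕ, 0 < n ∧ z ^ n = 1

-- eigenvalue transfer along an intertwining surjection, domain finite-dimensional
private lemma eig_transfer {V W : Type*} [AddCommGroup V] [Module ℂ V] [AddCommGroup W]
    [Module ℂ W] [FiniteDimensional ℂ V] (π : V →ₗ[ℂ] W) (hπ : Function.Surjective π)
    (T : Module.End ℂ V) (S : Module.End ℂ W) (h : ∀ v, π (T v) = S (π v)) {μ : ℂ}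
    (hS : S.HasEigenvalue μ) : T.HasEigenvalue μ := by
  have hW : FiniteDimensional ℂ W := Module.Finite.of_surjective π hπ
  rw [Module.End.hasEigenvalue_iff] at hS ⊢
  intro hT
  apply hS
  have hinj : Function.Injective (T - μ • (1 : Module.End ℂ V)) := by
    rw [← LinearMap.ker_eq_bot, ← Module.End.eigenspace_def]
    exact hT
  have hsurjT : Function.Surjective (T - μ • (1 : Module.End ℂ V)) :=
    (LinearMap.injective_iff_surjective).mp hinj
  have hsurjS : Function.Surjective (S - μ • (1 : Module.End ℂ W)) := by
    intro w
    obtain ⟨u, hu⟩ := hπ w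
    obtain ⟨v, hv⟩ := hsurjT u
    refine ⟨π v, ?_⟩
    have : π (T v - μ • v) = S (π v) - μ • π v := by
      rw [map_sub, map_smul, h]
    simp only [LinearMap.sub_apply, LinearMap.smul_apply] at hv ⊢
    simp only [Module.End.one_apply] at hv ⊢
    rw [← this, hv, hu]
  have hinjS : Function.Injective (S - μ • (1 : Module.End ℂ W)) :=
    (LinearMap.injective_iff_surjective).mpr hsurjS
  rw [Module.End.eigenspace_def, LinearMap.ker_eq_bot]
  exact hinjS

private lemma baseChange_surj {M N : Type*} [AddCommGroup M] [AddCommGroup N]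
    (f : M →ₗ[ℤ] N) (n : ℕ) (hn : n ≠ 0) (hf : ∀ m : N, ∃ y : M, f y = (n : ℤ) • m) :
    Function.Surjective (f.baseChange ℂ) := by
  rw [← LinearMap.range_eq_top]
  rw [eq_top_iff]
  rintro x -
  induction x with
  | zero => exact Submodule.zero_mem _
  | add a b ha hb => exact Submodule.add_mem _ ha hb
  | tmul z m =>
      obtain ⟨y, hy⟩ := hf m
      refine ⟨(z * (n : ℂ)⁻¹) ⊗ₜ[ℤ] y, ?_⟩
      rw [LinearMap.baseChange_tmul, hy]
      have h1 : (z * (n : ℂ)⁻¹) ⊗ₜ[ℤ] ((n : ℤ) • m) = ((n : ℤ) • (z * (n : ℂ)⁻¹)) ⊗ₜ[ℤ] m :=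
        (TensorProduct.smul_tmul _ _ _).symm
      rw [h1]
      congr 1
      have : ((n : ℤ) • (z * (n : ℂ)⁻¹)) = (n : ℂ) * (z * (n : ℂ)⁻¹) := by
        simp [zsmul_eq_mul]
      rw [this]
      rw [mul_comm z, mul_inv_cancel_left₀ (by exact_mod_cast hn : (n:ℂ) ≠ 0)]

private lemma exists_pow_mem {F : Type*} [Group F] (H : Subgroup F) [H.FiniteIndex]
    (a : Abelianization F) :
    ∃ b : Abelianization ↥H, Abelianization.map H.subtype b = a ^ H.index := by
  have hofsurj : Function.Surjective (Abelianization.of : F →* Abelianization F) :=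
    fun x => QuotientGroup.induction_on x fun g => ⟨g, rfl⟩
  set K : Subgroup (Abelianization F) := H.map Abelianization.of with hK
  have hdvd : K.index ∣ H.index := Subgroup.index_map_dvd H hofsurj
  have hKne : K.index ≠ 0 := by
    intro h0
    rw [h0] at hdvd
    exact Subgroup.FiniteIndex.index_ne_zero (H := H) (zero_dvd_iff.mp hdvd)
  haveI : K.FiniteIndex := ⟨hKne⟩
  obtain ⟨c, hc⟩ := hdvd
  have hmem : a ^ H.index ∈ K := by
    rw [hc, pow_mul]
    exact Subgroup.pow_mem K (Subgroup.pow_index_mem K a) c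
  obtain ⟨g, hg, hgeq⟩ := hmem
  exact ⟨Abelianization.of (⟨g, hg⟩ : ↥H), by rw [Abelianization.map_of]; exact hgeq⟩

theorem restriction_has_non_root_of_unity_eigenvalue
    {F : Type*} [Group F] [IsFreeGroup F] [Group.FG F] (φ : F ≃* F)
    (lam : ℂ) (hlam : lam ∈ specNZ φ.toMonoidHom) (hroot : ¬ IsRootOfUnity lam)
    (H : Subgroup F) [H.FiniteIndex] (hinv : ∀ x ∈ H, φ x ∈ H) :
    ∃ μ : ℂ, Module.End.HasEigenvalue (inducedEnd (restrictHom φ.toMonoidHom H hinv)) μ ∧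
      ¬ IsRootOfUnity μ := by
  obtain ⟨-, heig⟩ := hlam
  refine ⟨lam, ?_, hroot⟩
  set ψ := restrictHom φ.toMonoidHom H hinv with hψ
  set ι : Abelianization ↥H →* Abelianization F := Abelianization.map H.subtype with hι
  set ιL : (Additive (Abelianization ↥H)) →ₗ[ℤ] (Additive (Abelianization F)) :=
    (MonoidHom.toAdditive ι).toIntLinearMap with hιL
  haveI : Group.FG (Abelianization ↥H) :=
    Group.fg_of_surjective (G := ↥H)
      (fun x => QuotientGroup.induction_on x fun g => ⟨g, rfl⟩ :
        Function.Surjective (Abelianization.of : ↥H →* Abelianization ↥H))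
  haveI : Module.Finite ℤ (Additive (Abelianization ↥H)) :=
    Module.Finite.iff_addGroup_fg.mpr inferInstance
  -- surjectivity
  have hsurj : Function.Surjective (ιL.baseChange ℂ) := by
    apply baseChange_surj ιL H.index Subgroup.FiniteIndex.index_ne_zero
    intro m
    obtain ⟨b, hb⟩ := exists_pow_mem H m.toMul
    refine ⟨Additive.ofMul b, ?_⟩
    show Additive.ofMul (ι b) = _
    rw [hb, natCast_zsmul, ofMul_pow]
    rfl
  -- intertwining
  have hcomp : ιL ∘ₗ (MonoidHom.toAdditive (Abelianization.map ψ)).toIntLinearMap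
      = (MonoidHom.toAdditive (Abelianization.map φ.toMonoidHom)).toIntLinearMap ∘ₗ ιL := by
    apply LinearMap.ext
    intro x
    show Additive.ofMul (ι (Abelianization.map ψ x.toMul))
      = Additive.ofMul (Abelianization.map φ.toMonoidHom (ι x.toMul))
    congr 1
    rw [hι, Abelianization.map_map_apply, Abelianization.map_map_apply]
    have : H.subtype.comp ψ = φ.toMonoidHom.comp H.subtype := by
      ext x; rfl
    rw [this]
  have hcommL : (ιL.baseChange ℂ) ∘ₗ inducedEnd ψ
      = inducedEnd φ.toMonoidHom ∘ₗ (ιL.baseChange ℂ) := by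
    unfold inducedEnd
    rw [← LinearMap.baseChange_comp, ← LinearMap.baseChange_comp, hcomp]
  exact eig_transfer (ιL.baseChange ℂ) hsurj _ _
    (fun v => by simpa [LinearMap.comp_apply] using LinearMap.congr_fun hcommL v) heig
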